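/- arXiv:1108.5751 — 6 statements merged into one kernel-verified Lean document; each statement's English description precedes it below -/
import Mathlib

section
/- Let κ be an infinite regular cardinal and let C_κ be the associated space on the set of ordinals ξ ≤ o, where o is the initial ordinal of κ. Let τ be a topology on the same set which is finer than the topology of C_κ and in which the top point o is not isolated (so the space Y = (underlying set of C_κ, τ) is a prime space with accumulation point o). Then there exist an index type I and a quotient map from the topological sum of I copies of Y onto C_κ (i.e., C_κ belongs to the coreflective hull of Y in Top). -/
open Topology

universe u v w

/-- A class of topological spaces (underlying types in a fixed universe). -/
def SpaceClass : Type (u + 1) :=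
  ∀ (X : Type u), TopologicalSpace X → Prop

/-- Closedness under homeomorphic copies. -/
def ClosedUnderHomeo (ℬ : SpaceClass.{u}) : Prop :=
  ∀ (X Y : Type u) (tX : TopologicalSpace X) (tY : TopologicalSpace Y),
    Nonempty (@Homeomorph X Y tX tY) → ℬ X tX → ℬ Y tY

/-- An epireflective class: closed under homeomorphic copies, subspaces and
set-indexed topological products. -/
structure IsEpireflectiveClass (𝒜 : SpaceClass.{u}) : Prop where
  homeo : ClosedUnderHomeo 𝒜
  subspace : ∀ (X : Type u) (tX : TopologicalSpace X) (s : Set X),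
    𝒜 X tX → 𝒜 s (TopologicalSpace.induced (Subtype.val : s → X) tX)
  prod : ∀ (ι : Type u) (Y : ι → Type u) (t : ∀ i, TopologicalSpace (Y i)),
    (∀ i, 𝒜 (Y i) (t i)) → 𝒜 (∀ i, Y i) (@Pi.topologicalSpace ι Y t)

/-- The disjoint-union (topological sum) topology on a sigma type. -/
def sigmaTop {ι : Type v} (Y : ι → Type w) (t : ∀ i, TopologicalSpace (Y i)) :
    TopologicalSpace (Σ i, Y i) :=
  ⨆ i, TopologicalSpace.coinduced (Sigma.mk i) (t i)

/-- An AD-class in `𝒜`: a subclass of `𝒜` closed under homeomorphic copies, closed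
under topological sums of arbitrary families of its members, and divisible in `𝒜`
(quotients in `𝒜` of members of `ℬ` belong to `ℬ`). -/
structure IsADClass (𝒜 ℬ : SpaceClass.{u}) : Prop where
  subset : ∀ (X : Type u) (tX : TopologicalSpace X), ℬ X tX → 𝒜 X tX
  homeo : ClosedUnderHomeo ℬ
  sums : ∀ (ι : Type u) (Y : ι → Type u) (t : ∀ i, TopologicalSpace (Y i)),
    (∀ i, ℬ (Y i) (t i)) → ℬ (Σ i, Y i) (sigmaTop Y t)
  divisible : ∀ (X Z : Type u) (tX : TopologicalSpace X) (tZ : TopologicalSpace Z)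
    (q : X → Z), ℬ X tX → 𝒜 Z tZ → @IsQuotientMap X Z tX tZ q → ℬ Z tZ

/-- A class is hereditary if every nonempty subspace of each member belongs to it. -/
def IsHereditary (ℬ : SpaceClass.{u}) : Prop :=
  ∀ (X : Type u) (tX : TopologicalSpace X) (s : Set X), s.Nonempty → ℬ X tX →
    ℬ s (TopologicalSpace.induced (Subtype.val : s → X) tX)

/-- The prime factor `X_a`: the topology on the underlying set of `X` whose open sets
are exactly the sets `U` such that `a ∈ U` implies `U` is a neighbourhood of `a`. -/
def primeFactor {X : Type u} (t : TopologicalSpace X) (a : X) : TopologicalSpace X where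
  IsOpen U := a ∈ U → U ∈ @nhds X t a
  isOpen_univ := fun _ => Filter.univ_mem
  isOpen_inter := fun U V hU hV h => Filter.inter_mem (hU h.1) (hV h.2)
  isOpen_sUnion := fun S hS h => by
    obtain ⟨U, hU, haU⟩ := h
    exact Filter.mem_of_superset (hS U hU haU) (Set.subset_sUnion_of_mem hU)

/-- A prime space: a topological space with exactly one non-isolated point. -/
def IsPrimeSpace (X : Type u) (t : TopologicalSpace X) : Prop :=
  ∃! a : X, ¬ @IsOpen X t {a}

/-- The space `C_α` on the set of ordinals `ξ ≤ α.ord`: every `ξ < α.ord` is isolated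
and the tails `B_β = {ξ | β ≤ ξ ≤ α.ord}`, for `β < α.ord`, form a neighbourhood base
at the top point `α.ord`. -/
def CTop (α : Cardinal.{u}) : TopologicalSpace {ξ : Ordinal.{u} // ξ ≤ α.ord} :=
  TopologicalSpace.generateFrom
    ({U | ∃ x : {ξ : Ordinal.{u} // ξ ≤ α.ord}, x.1 < α.ord ∧ U = {x}} ∪
     {U | ∃ β : Ordinal.{u}, β < α.ord ∧
        U = {x : {ξ : Ordinal.{u} // ξ ≤ α.ord} | β ≤ x.1}})


/-- Auxiliary: a set in `C_kappa` not containing the top point is open. -/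
theorem ctop_open_of_not_top (κ : Cardinal.{u}) (A : Set {ξ : Ordinal.{u} // ξ ≤ κ.ord})
    (hA : (⟨κ.ord, le_refl κ.ord⟩ : {ξ : Ordinal.{u} // ξ ≤ κ.ord}) ∉ A) :
    IsOpen[CTop κ] A := by
  letI := CTop κ
  have hrw : A = ⋃ x ∈ A, ({x} : Set {ξ : Ordinal.{u} // ξ ≤ κ.ord}) := by
    ext y; simp
  rw [hrw]
  refine isOpen_biUnion fun x hx => ?_
  have hxlt : x.1 < κ.ord := by
    rcases lt_or_eq_of_le x.2 with h | h
    · exact h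
    · have hxeq : x = (⟨κ.ord, le_refl κ.ord⟩ : {ξ : Ordinal.{u} // ξ ≤ κ.ord}) :=
        Subtype.ext h
      exact absurd (hxeq ▸ hx) hA
  exact TopologicalSpace.GenerateOpen.basic _ (Or.inl ⟨x, hxlt, rfl⟩)

/-- Auxiliary: characterization of open sets in `C_kappa`. -/
theorem ctop_open_iff (κ : Cardinal.{u}) (hpos : 0 < κ.ord)
    (U : Set {ξ : Ordinal.{u} // ξ ≤ κ.ord}) :
    IsOpen[CTop κ] U ↔
      ((⟨κ.ord, le_refl κ.ord⟩ : {ξ : Ordinal.{u} // ξ ≤ κ.ord}) ∈ U →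
        ∃ β < κ.ord, ∀ x : {ξ : Ordinal.{u} // ξ ≤ κ.ord}, β ≤ x.1 → x ∈ U) := by
  constructor
  · intro h
    induction h with
    | basic V hV =>
      rcases hV with ⟨x, hxlt, rfl⟩ | ⟨β, hβ, rfl⟩
      · intro htop
        rw [Set.mem_singleton_iff] at htop
        exact absurd (htop ▸ hxlt) (lt_irrefl _)
      · intro _
        exact ⟨β, hβ, fun x hx => hx⟩
    | univ => exact fun _ => ⟨0, hpos, fun x _ => trivial⟩
    | inter V W hV hW ihV ihW =>
      intro h
      obtain ⟨β₁, hβ₁, hb₁⟩ := ihV h.1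
      obtain ⟨β₂, hβ₂, hb₂⟩ := ihW h.2
      exact ⟨max β₁ β₂, max_lt hβ₁ hβ₂,
        fun x hx => ⟨hb₁ x (le_trans (le_max_left _ _) hx),
          hb₂ x (le_trans (le_max_right _ _) hx)⟩⟩
    | sUnion S hS ih =>
      intro h
      obtain ⟨V, hV, hxV⟩ := h
      obtain ⟨β, hβ, hb⟩ := ih V hV hxV
      exact ⟨β, hβ, fun x hx => ⟨V, hV, hb x hx⟩⟩
  · intro h
    by_cases htop : (⟨κ.ord, le_refl κ.ord⟩ : {ξ : Ordinal.{u} // ξ ≤ κ.ord}) ∈ U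
    · obtain ⟨β, hβ, hb⟩ := h htop
      have hrw : U = {x : {ξ : Ordinal.{u} // ξ ≤ κ.ord} | β ≤ x.1} ∪
          (U \ {x : {ξ : Ordinal.{u} // ξ ≤ κ.ord} | β ≤ x.1}) := by
        ext x
        constructor
        · intro hx
          by_cases hbx : β ≤ x.1
          · exact Or.inl hbx
          · exact Or.inr ⟨hx, hbx⟩
        · rintro (hx | hx)
          · exact hb x hx
          · exact hx.1
      rw [hrw]
      letI := CTop κ
      refine IsOpen.union (TopologicalSpace.GenerateOpen.basic _ (Or.inr ⟨β, hβ, rfl⟩)) ?_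
      exact ctop_open_of_not_top κ _ (fun hc => hc.2 (le_of_lt hβ))
    · exact ctop_open_of_not_top κ U htop

/-- For an infinite regular cardinal `κ` and any topology `τ` finer
than that of `C_κ` in which the top point is not isolated, `C_κ` is a quotient of a
topological sum of copies of `(C_κ, τ)`, i.e. `C_κ` lies in the coreflective hull
of `(C_κ, τ)` in `Top`. -/
theorem statement13 (κ : Cardinal.{u}) (hκ : Cardinal.aleph0 ≤ κ) (hreg : κ.IsRegular)
    (τ : TopologicalSpace {ξ : Ordinal.{u} // ξ ≤ κ.ord}) (hfine : τ ≤ CTop κ)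
    (htop : ¬ @IsOpen _ τ {(⟨κ.ord, le_refl κ.ord⟩ : {ξ : Ordinal.{u} // ξ ≤ κ.ord})}) :
    ∃ (I : Type (u + 1))
      (q : (Σ _ : I, {ξ : Ordinal.{u} // ξ ≤ κ.ord}) → {ξ : Ordinal.{u} // ξ ≤ κ.ord}),
      @IsQuotientMap _ _
        (sigmaTop (fun _ : I => {ξ : Ordinal.{u} // ξ ≤ κ.ord}) (fun _ => τ))
        (CTop κ) q := by
  classical
  have hpos : 0 < κ.ord := by
    have h0 : (0 : Cardinal.{u}) < κ := lt_of_lt_of_le Cardinal.aleph0_pos hκ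
    have := Cardinal.ord_lt_ord.mpr h0
    rwa [Cardinal.ord_zero] at this
  refine ⟨ULift.{u + 1} {f : {ξ : Ordinal.{u} // ξ ≤ κ.ord} → {ξ : Ordinal.{u} // ξ ≤ κ.ord} // @Continuous {ξ : Ordinal.{u} // ξ ≤ κ.ord} {ξ : Ordinal.{u} // ξ ≤ κ.ord} (CTop κ) (CTop κ) f},
    fun p => p.1.down.val p.2,
    @Topology.IsQuotientMap.mk _ _
      (sigmaTop (fun _ : ULift.{u + 1}
          {f : {ξ : Ordinal.{u} // ξ ≤ κ.ord} → {ξ : Ordinal.{u} // ξ ≤ κ.ord} // @Continuous {ξ : Ordinal.{u} // ξ ≤ κ.ord} {ξ : Ordinal.{u} // ξ ≤ κ.ord} (CTop κ) (CTop κ) f} => {ξ : Ordinal.{u} // ξ ≤ κ.ord}) (fun _ => τ))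
      (CTop κ) _ ?_ ?_⟩
  swap
  · intro x
    exact ⟨⟨ULift.up ⟨id, @continuous_id _ (CTop κ)⟩, x⟩, rfl⟩
  · -- topology equality
    set I : Type (u + 1) :=
      ULift.{u + 1} {f : {ξ : Ordinal.{u} // ξ ≤ κ.ord} → {ξ : Ordinal.{u} // ξ ≤ κ.ord} // @Continuous {ξ : Ordinal.{u} // ξ ≤ κ.ord} {ξ : Ordinal.{u} // ξ ≤ κ.ord} (CTop κ) (CTop κ) f} with hI
    set q : (Σ _ : I, {ξ : Ordinal.{u} // ξ ≤ κ.ord}) → {ξ : Ordinal.{u} // ξ ≤ κ.ord} := fun p => p.1.down.val p.2 with hq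
    have key : ∀ U : Set {ξ : Ordinal.{u} // ξ ≤ κ.ord},
        IsOpen[TopologicalSpace.coinduced q (sigmaTop (fun _ : I => {ξ : Ordinal.{u} // ξ ≤ κ.ord}) (fun _ => τ))] U ↔
        ∀ f : {f : {ξ : Ordinal.{u} // ξ ≤ κ.ord} → {ξ : Ordinal.{u} // ξ ≤ κ.ord} // @Continuous {ξ : Ordinal.{u} // ξ ≤ κ.ord} {ξ : Ordinal.{u} // ξ ≤ κ.ord} (CTop κ) (CTop κ) f},
          IsOpen[τ] (f.val ⁻¹' U) := by
      intro U
      constructor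
      · intro h f
        have h' : IsOpen[⨆ i : I, TopologicalSpace.coinduced (Sigma.mk i) τ] (q ⁻¹' U) := h
        exact (@isOpen_iSup_iff (Σ _ : I, {ξ : Ordinal.{u} // ξ ≤ κ.ord}) I
          (fun i => TopologicalSpace.coinduced (Sigma.mk i) τ) (q ⁻¹' U)).mp h' (ULift.up f)
      · intro h
        show IsOpen[⨆ i : I, TopologicalSpace.coinduced (Sigma.mk i) τ] (q ⁻¹' U)
        exact (@isOpen_iSup_iff (Σ _ : I, {ξ : Ordinal.{u} // ξ ≤ κ.ord}) I
          (fun i => TopologicalSpace.coinduced (Sigma.mk i) τ) (q ⁻¹' U)).mpr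
          (fun i => h i.down)
    refine @IsCoinducing.mk _ _ (sigmaTop (fun _ : I => {ξ : Ordinal.{u} // ξ ≤ κ.ord}) (fun _ => τ)) (CTop κ) q ?_
    rw [TopologicalSpace.ext_iff]
    intro U
    rw [key U]
    constructor
    · intro hU f
      exact IsOpen.mono (@Continuous.isOpen_preimage _ _ (CTop κ) (CTop κ) _ f.2 U hU) hfine
    · intro hall
      rw [ctop_open_iff κ hpos]
      intro htopU
      by_contra hno
      push_neg at hno
      have hno' : ∀ β : Ordinal.{u}, β < κ.ord → ∃ x : {ξ : Ordinal.{u} // ξ ≤ κ.ord}, β ≤ x.1 ∧ x ∉ U := by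
        intro β hβ
        obtain ⟨x, hx1, hx2⟩ := hno β hβ
        exact ⟨x, hx1, hx2⟩
      set f : {ξ : Ordinal.{u} // ξ ≤ κ.ord} → {ξ : Ordinal.{u} // ξ ≤ κ.ord} := fun x =>
        if h : x.1 < κ.ord then Classical.choose (hno' x.1 h)
        else ⟨κ.ord, le_refl κ.ord⟩ with hf
      have hfspec : ∀ (x : {ξ : Ordinal.{u} // ξ ≤ κ.ord}) (h : x.1 < κ.ord), x.1 ≤ (f x).1 ∧ f x ∉ U := by
        intro x h
        have := Classical.choose_spec (hno' x.1 h)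
        simp only [hf, dif_pos h]
        exact this
      have hftop : ∀ (x : {ξ : Ordinal.{u} // ξ ≤ κ.ord}), ¬ x.1 < κ.ord → f x = ⟨κ.ord, le_refl κ.ord⟩ := by
        intro x h
        simp only [hf, dif_neg h]
      have hcont : @Continuous {ξ : Ordinal.{u} // ξ ≤ κ.ord} {ξ : Ordinal.{u} // ξ ≤ κ.ord} (CTop κ) (CTop κ) f := by
        rw [continuous_def]
        intro V hV
        rw [ctop_open_iff κ hpos] at hV ⊢
        intro htV
        have htopmem : (⟨κ.ord, le_refl κ.ord⟩ : {ξ : Ordinal.{u} // ξ ≤ κ.ord}) ∈ V := by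
          have h1 : f ⟨κ.ord, le_refl κ.ord⟩ = ⟨κ.ord, le_refl κ.ord⟩ :=
            hftop _ (lt_irrefl _)
          rwa [Set.mem_preimage, h1] at htV
        obtain ⟨β, hβ, hb⟩ := hV htopmem
        refine ⟨β, hβ, fun x hx => ?_⟩
        by_cases h : x.1 < κ.ord
        · exact hb _ (le_trans hx (hfspec x h).1)
        · rw [Set.mem_preimage, hftop x h]
          exact hb _ (le_of_lt hβ)
      have hpre : f ⁻¹' U = {(⟨κ.ord, le_refl κ.ord⟩ : {ξ : Ordinal.{u} // ξ ≤ κ.ord})} := by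
        ext x
        simp only [Set.mem_preimage, Set.mem_singleton_iff]
        constructor
        · intro hx
          by_cases h : x.1 < κ.ord
          · exact absurd hx (hfspec x h).2
          · exact Subtype.ext (le_antisymm x.2 (not_lt.mp h))
        · intro hx
          rw [hx, hftop _ (lt_irrefl _)]
          exact htopU
      have := hall ⟨f, hcont⟩
      rw [hpre] at this
      exact htop this
end

section
/- Let X be a zero-dimensional topological space (the clopen subsets of X form a basis of its topology) and let α be a cardinal such that: there exists a family of open subsets of X indexed by a set of cardinality α whose intersection is not open, while the intersection of every family of open subsets of X indexed by a set of cardinality strictly less than α is open. Then there exist a topology τ on the underlying set of C_α which is finer than the topology of C_α and in which the top point is not isolated (so Y = (underlying set of C_α, τ) is a prime space), and a quotient map q : X → Y. -/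
open Topology

universe u v w

/-- Auxiliary: an intersection of opens indexed by the ordinals below `ξ`, with
`ξ.card < α`, is open (reindexing through `ξ.ToType`). -/
lemma aux_inter_open {X : Type u} [TopologicalSpace X] {α : Cardinal.{u}}
    (hsmall : ∀ (ι : Type u) (U : ι → Set X), Cardinal.mk ι < α →
      (∀ i, IsOpen (U i)) → IsOpen (⋂ i, U i))
    (ξ : Ordinal.{u}) (hξ : ξ.card < α) (W : Ordinal.{u} → Set X)
    (hW : ∀ η < ξ, IsOpen (W η)) : IsOpen (⋂ η ∈ Set.Iio ξ, W η) := by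
  have key : (⋂ η ∈ Set.Iio ξ, W η)
      = ⋂ i : ξ.ToType, W ((Ordinal.ToType.mk (o := ξ)).symm i).1 := by
    ext x
    simp only [Set.mem_iInter, Set.mem_Iio]
    constructor
    · intro h i
      exact h _ ((Ordinal.ToType.mk (o := ξ)).symm i).2
    · intro h η hη
      have := h ((Ordinal.ToType.mk (o := ξ)) ⟨η, hη⟩)
      simpa using this
  rw [key]
  exact hsmall _ _ (by rw [Cardinal.mk_toType]; exact hξ)
    fun i => hW _ ((Ordinal.ToType.mk (o := ξ)).symm i).2

/-- Let `X` be zero-dimensional and `α` the least cardinal admitting a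
family of `α` open sets with non-open intersection (intersections of fewer than `α`
open sets being open). Then there is a prime topology `τ` finer than `C_α` (with the
top point non-isolated) and a quotient map `q : X → (C_α, τ)`. -/
theorem statement15 {X : Type u} [tX : TopologicalSpace X]
    (hzd : ∀ (U : Set X) (x : X), IsOpen U → x ∈ U →
      ∃ V : Set X, IsClopen V ∧ x ∈ V ∧ V ⊆ U)
    (α : Cardinal.{u})
    (hbig : ∃ (ι : Type u) (U : ι → Set X), Cardinal.mk ι = α ∧
      (∀ i, IsOpen (U i)) ∧ ¬ IsOpen (⋂ i, U i))
    (hsmall : ∀ (ι : Type u) (U : ι → Set X), Cardinal.mk ι < α →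
      (∀ i, IsOpen (U i)) → IsOpen (⋂ i, U i)) :
    ∃ τ : TopologicalSpace {ξ : Ordinal.{u} // ξ ≤ α.ord},
      τ ≤ CTop α ∧
      ¬ @IsOpen _ τ {(⟨α.ord, le_refl α.ord⟩ : {ξ : Ordinal.{u} // ξ ≤ α.ord})} ∧
      ∃ q : X → {ξ : Ordinal.{u} // ξ ≤ α.ord}, @IsQuotientMap _ _ tX τ q := by
  classical
  set o := α.ord with ho
  obtain ⟨ι, U, hι, hUo, hUn⟩ := hbig
  -- a point where the intersection fails to be a neighbourhood
  have hA : ∃ a ∈ ⋂ i, U i, (⋂ i, U i) ∉ 𝓝 a := by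
    by_contra h
    push_neg at h
    exact hUn (isOpen_iff_mem_nhds.mpr h)
  obtain ⟨a, haA, hnA⟩ := hA
  -- clopen shrinking around `a`
  choose V hVclopen haV hVU using fun i => hzd (U i) a (hUo i) (Set.mem_iInter.mp haA i)
  -- re-index the family by the ordinals below `o`
  have hcard : Cardinal.mk o.ToType = Cardinal.mk ι := by
    rw [Cardinal.mk_toType, ho, Cardinal.card_ord, hι]
  obtain ⟨g⟩ := Cardinal.eq.mp hcard
  set W : Ordinal.{u} → Set X := fun ξ =>
    if h : ξ < o then V (g ((Ordinal.ToType.mk (o := o)) ⟨ξ, h⟩)) else Set.univ with hWdef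
  have hWuniv : ∀ ξ, ¬ ξ < o → W ξ = Set.univ := fun ξ h => dif_neg h
  have hWclopen : ∀ ξ < o, IsClopen (W ξ) := by
    intro ξ h
    rw [hWdef]; dsimp only; rw [dif_pos h]; exact hVclopen _
  have haW : ∀ ξ, a ∈ W ξ := by
    intro ξ
    by_cases h : ξ < o
    · rw [hWdef]; dsimp only; rw [dif_pos h]; exact haV _
    · rw [hWuniv ξ h]; trivial
  set B : Set X := ⋂ η ∈ Set.Iio o, W η with hBdef
  have hBsub : B ⊆ ⋂ i, U i := by
    intro x hx
    apply Set.mem_iInter.mpr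
    intro i
    set s := (Ordinal.ToType.mk (o := o)).symm (g.symm i) with hs
    have hxs : x ∈ W s.1 := by
      have := Set.mem_iInter.mp hx s.1
      exact Set.mem_iInter.mp this s.2
    have : W s.1 = V i := by
      rw [hWdef]; dsimp only
      rw [dif_pos (show (s : Ordinal.{u}) < o from s.2)]
      have : (⟨s.1, s.2⟩ : Set.Iio o) = s := rfl
      rw [this, hs, OrderIso.apply_symm_apply, Equiv.apply_symm_apply]
    rw [this] at hxs
    exact hVU i hxs
  have haB : a ∈ B := by
    apply Set.mem_iInter.mpr; intro ξ
    apply Set.mem_iInter.mpr; intro _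
    exact haW ξ
  have hBnhds : B ∉ 𝓝 a := fun h => hnA (Filter.mem_of_superset h hBsub)
  have hBn : ¬ IsOpen B := fun h => hBnhds (h.mem_nhds haB)
  -- the set of indices where the intersection strictly drops
  set S : Set Ordinal.{u} :=
    {ξ | ξ < o ∧ ((⋂ η ∈ Set.Iio ξ, W η) \ W ξ).Nonempty} with hSdef
  have hBS : (⋂ ξ ∈ S, W ξ) = B := by
    apply Set.Subset.antisymm
    · intro x hx
      apply Set.mem_iInter.mpr; intro ζ
      apply Set.mem_iInter.mpr
      induction ζ using Ordinal.induction with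
      | h ζ IH =>
      intro hζ
      have hxlt : x ∈ ⋂ η ∈ Set.Iio ζ, W η := by
        apply Set.mem_iInter.mpr; intro η
        apply Set.mem_iInter.mpr; intro hη
        by_cases hηo : η < o
        · exact IH η hη hηo
        · rw [hWuniv η hηo]; trivial
      by_cases hζS : ζ ∈ S
      · exact Set.mem_iInter.mp (Set.mem_iInter.mp hx ζ) hζS
      · by_contra hxW
        exact hζS ⟨hζ, ⟨x, hxlt, hxW⟩⟩
    · intro x hx
      apply Set.mem_iInter.mpr; intro ξ
      apply Set.mem_iInter.mpr; intro hξ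
      exact Set.mem_iInter.mp (Set.mem_iInter.mp hx ξ) hξ.1
  -- S is large
  set St : Set o.ToType := {i | ((Ordinal.ToType.mk (o := o)).symm i).1 ∈ S} with hStdef
  have hSbig : α ≤ Cardinal.mk St := by
    by_contra h
    push_neg at h
    have hopen : IsOpen (⋂ i : St, W ((Ordinal.ToType.mk (o := o)).symm i.1).1) := by
      apply hsmall _ _ h
      intro i
      exact (hWclopen ((Ordinal.ToType.mk (o := o)).symm i.1).1
        (Set.mem_Iio.mp ((Ordinal.ToType.mk (o := o)).symm i.1).2)).isOpen
    have heq : (⋂ i : St, W ((Ordinal.ToType.mk (o := o)).symm i.1).1) = ⋂ ξ ∈ S, W ξ := by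
      ext x
      simp only [Set.mem_iInter]
      constructor
      · intro hx ξ hξ
        have hξo : ξ < o := hξ.1
        have hmem : (Ordinal.ToType.mk (o := o)) ⟨ξ, hξo⟩ ∈ St := by
          rw [hStdef]
          simp only [Set.mem_setOf_eq, OrderIso.symm_apply_apply]
          exact hξ
        have := hx ⟨_, hmem⟩
        simpa using this
      · intro hx i
        exact hx _ i.2
    rw [heq, hBS] at hopen
    exact hBn hopen
  -- enumerate S (padded to an unbounded set)
  set S' : Set Ordinal.{u} := S ∪ Set.Ici o with hS'def
  have hub : ¬ BddAbove S' := by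
    rintro ⟨b, hb⟩
    have hmem : max o (b + 1) ∈ S' := Or.inr (Set.mem_Ici.mpr (le_max_left _ _))
    have h1 : b + 1 ≤ b := le_trans (le_max_right o (b + 1)) (hb hmem)
    have h2 : b < b + 1 := by
      rw [Ordinal.add_one_eq_succ]; exact Order.lt_succ b
    exact absurd h1 h2.not_ge
  set e : Ordinal.{u} → Ordinal.{u} := Ordinal.enumOrd S' with hedef
  have hemem : ∀ ξ, e ξ ∈ S' := fun ξ => Ordinal.enumOrd_mem hub ξ
  have hmono : StrictMono e := Ordinal.enumOrd_strictMono hub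
  have hele : ∀ ξ, ξ ≤ e ξ := fun _ => hmono.le_apply
  have helt : ∀ ξ < o, e ξ < o := by
    by_contra h
    push_neg at h
    obtain ⟨ξ, hξo, hoe⟩ := h
    set T : Set Ordinal.{u} := {ζ | o ≤ e ζ} with hTdef
    have hTne : T.Nonempty := ⟨ξ, hoe⟩
    set ξ₀ := sInf T with hξ₀def
    have hξ₀T : o ≤ e ξ₀ := csInf_mem hTne
    have hξ₀lt : ξ₀ < o := lt_of_le_of_lt (csInf_le' hoe) hξo
    have hch : ∀ i : St, ∃ ζ, ζ < ξ₀ ∧ e ζ = ((Ordinal.ToType.mk (o := o)).symm i.1).1 := by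
      intro i
      have hiS : ((Ordinal.ToType.mk (o := o)).symm i.1).1 ∈ S := i.2
      obtain ⟨ζ, hζ⟩ := Ordinal.enumOrd_surjective hub (Or.inl hiS)
      rw [← hedef] at hζ
      refine ⟨ζ, ?_, hζ⟩
      by_contra hc
      push_neg at hc
      have : e ξ₀ ≤ e ζ := hmono.monotone hc
      have hlto : ((Ordinal.ToType.mk (o := o)).symm i.1).1 < o :=
        ((Ordinal.ToType.mk (o := o)).symm i.1).2
      rw [hζ] at this
      exact absurd (le_trans hξ₀T this) hlto.not_ge
    choose c hc1 hc2 using hch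
    have hinj : Function.Injective
        (fun i : St => (Ordinal.ToType.mk (o := ξ₀)) ⟨c i, hc1 i⟩) := by
      intro i j hij
      have hcc : c i = c j := by
        have := (Ordinal.ToType.mk (o := ξ₀)).injective hij
        exact congrArg Subtype.val this
      have hvv : ((Ordinal.ToType.mk (o := o)).symm i.1).1
          = ((Ordinal.ToType.mk (o := o)).symm j.1).1 := by
        rw [← hc2 i, ← hc2 j, hcc]
      have : (Ordinal.ToType.mk (o := o)).symm i.1 = (Ordinal.ToType.mk (o := o)).symm j.1 :=
        Subtype.ext hvv
      have : i.1 = j.1 := (Ordinal.ToType.mk (o := o)).symm.injective this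
      exact Subtype.ext this
    have hle : α ≤ ξ₀.card := by
      calc α ≤ Cardinal.mk St := hSbig
        _ ≤ Cardinal.mk ξ₀.ToType := Cardinal.mk_le_of_injective hinj
        _ = ξ₀.card := Cardinal.mk_toType _
    exact absurd hle (not_le.mpr (Cardinal.lt_ord.mp hξ₀lt))
  -- the re-indexed decreasing family
  set W' : Ordinal.{u} → Set X := fun ξ => W (e ξ) with hW'def
  have hW'univ : ∀ ξ, ¬ ξ < o → W' ξ = Set.univ := by
    intro ξ h
    apply hWuniv
    intro hc
    exact h (lt_of_le_of_lt (hele ξ) hc)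
  have hW'clopen : ∀ ξ < o, IsClopen (W' ξ) := fun ξ h => hWclopen _ (helt ξ h)
  have haW' : ∀ ξ, a ∈ W' ξ := fun ξ => haW _
  have hB' : (⋂ η ∈ Set.Iio o, W' η) = B := by
    apply Set.Subset.antisymm
    · rw [← hBS]
      intro x hx
      apply Set.mem_iInter.mpr; intro ξ
      apply Set.mem_iInter.mpr; intro hξ
      obtain ⟨ζ, hζ⟩ := Ordinal.enumOrd_surjective hub (Or.inl hξ)
      rw [← hedef] at hζ
      have hζo : ζ < o := lt_of_le_of_lt (le_of_le_of_eq (hele ζ) hζ) hξ.1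
      have hxx := Set.mem_iInter.mp (Set.mem_iInter.mp hx ζ) hζo
      simp only [hW'def] at hxx
      rwa [hζ] at hxx
    · intro x hx
      apply Set.mem_iInter.mpr; intro η
      apply Set.mem_iInter.mpr; intro hη
      exact Set.mem_iInter.mp (Set.mem_iInter.mp hx (e η)) (helt η hη)
  have hfib' : ∀ ξ < o, ((⋂ η ∈ Set.Iio ξ, W' η) \ W' ξ).Nonempty := by
    intro ξ hξ
    have heS : e ξ ∈ S := by
      rcases hemem ξ with hS | hI
      · exact hS
      · exact absurd hI (not_le.mpr (helt ξ hξ))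
    obtain ⟨x, hx1, hx2⟩ := heS.2
    refine ⟨x, ?_, hx2⟩
    apply Set.mem_iInter.mpr; intro η
    apply Set.mem_iInter.mpr; intro hη
    exact Set.mem_iInter.mp (Set.mem_iInter.mp hx1 (e η)) (hmono hη)
  -- the quotient map
  set D : Ordinal.{u} → Set X := fun ξ => if ξ < o then W' ξ else ∅ with hDdef
  have hDlt : ∀ ξ < o, D ξ = W' ξ := fun ξ h => if_pos h
  have hDge : ∀ ξ, ¬ ξ < o → D ξ = ∅ := fun ξ h => if_neg h
  have hne : ∀ x : X, {ξ : Ordinal.{u} | x ∉ D ξ}.Nonempty := by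
    intro x
    refine ⟨o, ?_⟩
    simp only [Set.mem_setOf_eq, hDge o (lt_irrefl o)]
    exact Set.notMem_empty x
  set f : X → Ordinal.{u} := fun x => sInf {ξ | x ∉ D ξ} with hfdef
  have hfle : ∀ x, f x ≤ o := by
    intro x
    apply csInf_le'
    simp only [Set.mem_setOf_eq, hDge o (lt_irrefl o)]
    exact Set.notMem_empty x
  have hfnotin : ∀ x, x ∉ D (f x) := fun x => csInf_mem (hne x)
  have hflt : ∀ x η, η < f x → x ∈ D η := by
    intro x η hη
    by_contra hc
    have : f x ≤ η := csInf_le' (show η ∈ {ξ : Ordinal.{u} | x ∉ D ξ} from hc)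
    exact absurd this hη.not_ge
  have hfeq : ∀ x ξ, f x = ξ ↔ (∀ η < ξ, x ∈ D η) ∧ x ∉ D ξ := by
    intro x ξ
    constructor
    · rintro rfl
      exact ⟨fun η hη => hflt x η hη, hfnotin x⟩
    · rintro ⟨h1, h2⟩
      have hle : f x ≤ ξ := csInf_le' h2
      rcases lt_or_eq_of_le hle with h | h
      · exact absurd (h1 _ h) (hfnotin x)
      · exact h
  set q : X → {ξ : Ordinal.{u} // ξ ≤ α.ord} := fun x => ⟨f x, hfle x⟩ with hqdef
  have hqpre : ∀ (y : {ξ : Ordinal.{u} // ξ ≤ α.ord}),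
      q ⁻¹' {y} = {x | (∀ η < y.1, x ∈ D η) ∧ x ∉ D y.1} := by
    intro y
    ext x
    simp only [Set.mem_preimage, Set.mem_singleton_iff, hqdef, Subtype.ext_iff,
      Set.mem_setOf_eq]
    exact hfeq x y.1
  have hsurj : Function.Surjective q := by
    rintro ⟨ξ, hξ⟩
    rcases lt_or_eq_of_le hξ with h | h
    · obtain ⟨x, hx1, hx2⟩ := hfib' ξ h
      refine ⟨x, Subtype.ext ?_⟩
      show f x = ξ
      apply (hfeq x ξ).mpr
      constructor
      · intro η hη
        rw [hDlt η (lt_trans hη h)]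
        exact Set.mem_iInter.mp (Set.mem_iInter.mp hx1 η) hη
      · rw [hDlt ξ h]; exact hx2
    · refine ⟨a, Subtype.ext ?_⟩
      show f a = ξ
      rw [h]
      apply (hfeq a o).mpr
      constructor
      · intro η hη
        rw [hDlt η hη]; exact haW' η
      · rw [hDge o (lt_irrefl o)]; exact Set.notMem_empty a
  refine ⟨TopologicalSpace.coinduced q tX, ?_, ?_, q, ?_⟩
  · -- finer than CTop α
    unfold CTop
    apply le_generateFrom
    rintro s (⟨x, hx, rfl⟩ | ⟨β, hβ, rfl⟩)
    · -- singleton of an isolated point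
      rw [isOpen_coinduced]
      have : q ⁻¹' {x} = (⋂ η ∈ Set.Iio x.1, D η) ∩ (W' x.1)ᶜ := by
        rw [hqpre x]
        ext z
        simp only [Set.mem_setOf_eq, Set.mem_inter_iff, Set.mem_iInter, Set.mem_Iio,
          Set.mem_compl_iff, hDlt x.1 hx]
      rw [this]
      apply IsOpen.inter
      · apply aux_inter_open hsmall x.1 (Cardinal.lt_ord.mp hx)
        intro η hη
        rw [hDlt η (lt_trans hη hx)]
        exact (hW'clopen η (lt_trans hη hx)).isOpen
      · exact (hW'clopen x.1 hx).isClosed.isOpen_compl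
    · -- a tail
      rw [isOpen_coinduced]
      have : q ⁻¹' {x : {ξ : Ordinal.{u} // ξ ≤ α.ord} | β ≤ x.1}
          = ⋂ η ∈ Set.Iio β, D η := by
        ext z
        simp only [Set.mem_preimage, Set.mem_setOf_eq, Set.mem_iInter, Set.mem_Iio]
        constructor
        · intro h η hη
          exact hflt z η (lt_of_lt_of_le hη h)
        · intro h
          by_contra hc
          push_neg at hc
          exact hfnotin z (h _ hc)
      rw [this]
      apply aux_inter_open hsmall β (Cardinal.lt_ord.mp hβ)
      intro η hη
      rw [hDlt η (lt_trans hη hβ)]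
      exact (hW'clopen η (lt_trans hη hβ)).isOpen
  · -- the top point is not isolated
    rw [isOpen_coinduced]
    have : q ⁻¹' {(⟨α.ord, le_refl α.ord⟩ : {ξ : Ordinal.{u} // ξ ≤ α.ord})} = B := by
      rw [hqpre ⟨α.ord, le_refl α.ord⟩, ← hB']
      ext z
      simp only [Set.mem_setOf_eq, Set.mem_iInter, Set.mem_Iio]
      constructor
      · intro h η hη
        have := h.1 η hη
        rwa [hDlt η hη] at this
      · intro h
        constructor
        · intro η hη
          rw [hDlt η hη]; exact h η hη
        · rw [hDge o (lt_irrefl o)]; exact Set.notMem_empty z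
    rw [this]
    exact hBn
  · exact @IsQuotientMap.mk X {ξ : Ordinal.{u} // ξ ≤ α.ord} tX
      (TopologicalSpace.coinduced q tX) q
      (@IsCoinducing.mk X _ tX (TopologicalSpace.coinduced q tX) q rfl) hsurj
end

section
/- Let f : X → Y be a surjective continuous map which is inducing (the topology of X is the initial topology with respect to f), let b ∈ Y and suppose f⁻¹({b}) = {a} for some a ∈ X. Then every map g : Y → X satisfying f ∘ g = id_Y is continuous as a map from the prime factor Y_b to the prime factor X_a, and X_a belongs to the coreflective hull of Y_b in Top: there exist an index type I and a quotient map from the topological sum of I copies of Y_b onto X_a. -/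
open Topology

universe u v w

/-- If `f : X → Y` is a surjective continuous inducing map with
`f ⁻¹' {b} = {a}`, then every section `g` of `f` is continuous from the prime factor
`Y_b` to the prime factor `X_a`, and `X_a` lies in the coreflective hull of `Y_b` in
`Top` (it is a quotient of a topological sum of copies of `Y_b`). -/
theorem statement16 {X Y : Type u} (tX : TopologicalSpace X) (tY : TopologicalSpace Y)
    (f : X → Y) (hsurj : Function.Surjective f) (hcont : @Continuous X Y tX tY f)
    (hind : tX = TopologicalSpace.induced f tY)
    (a : X) (b : Y) (hfib : f ⁻¹' {b} = {a}) :
    (∀ g : Y → X, f ∘ g = id →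
      @Continuous Y X (primeFactor tY b) (primeFactor tX a) g) ∧
    ∃ (I : Type u) (q : (Σ _ : I, Y) → X),
      @IsQuotientMap _ _ (sigmaTop (fun _ : I => Y) (fun _ => primeFactor tY b))
        (primeFactor tX a) q := by
  classical
  have hab : f a = b := by
    have : a ∈ f ⁻¹' {b} := by rw [hfib]; rfl
    exact this
  have hnhds : @nhds X tX a = Filter.comap f (@nhds Y tY b) := by
    rw [hind, nhds_induced, hab]
  have part1 : ∀ g : Y → X, f ∘ g = id →
      @Continuous Y X (primeFactor tY b) (primeFactor tX a) g := by
    intro g hg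
    rw [continuous_def]
    intro U hU hb
    have hgb : g b = a := by
      have h1 : g b ∈ f ⁻¹' {b} := by
        have := congrFun hg b
        simpa using this
      rw [hfib] at h1; exact h1
    have haU : a ∈ U := hgb ▸ hb
    have hUnhds : U ∈ @nhds X tX a := hU haU
    rw [hnhds, Filter.mem_comap] at hUnhds
    obtain ⟨V, hV, hVU⟩ := hUnhds
    refine Filter.mem_of_superset hV (fun y hy => ?_)
    have h2 : f (g y) = y := congrFun hg y
    exact hVU (show f (g y) ∈ V by rw [h2]; exact hy)
  refine ⟨part1, ?_⟩
  have hsspec : ∀ y, f (Classical.choose (hsurj y)) = y :=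
    fun y => Classical.choose_spec (hsurj y)
  set s : Y → X := fun y => Classical.choose (hsurj y) with hsdef
  refine ⟨{g : Y → X // f ∘ g = id}, fun p => p.1.1 p.2,
    @Topology.IsQuotientMap.mk _ _
      (sigmaTop (fun _ : {g : Y → X // f ∘ g = id} => Y) (fun _ => primeFactor tY b))
      (primeFactor tX a) _ ?_ ?_⟩
  swap
  · -- surjectivity
    intro x
    have hgsec : f ∘ (fun y => if y = f x then x else s y) = id := by
      funext y
      by_cases hy : y = f x
      · simp [hy]
      · simp [hy, hsdef, hsspec y]
    exact ⟨⟨⟨fun y => if y = f x then x else s y, hgsec⟩, f x⟩, by simp⟩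
  · -- topology equality
    refine @Topology.IsCoinducing.mk _ _
      (sigmaTop (fun _ : {g : Y → X // f ∘ g = id} => Y) (fun _ => primeFactor tY b))
      (primeFactor tX a) _ (TopologicalSpace.ext_iff.mpr fun U => ?_)
    rw [isOpen_coinduced]
    unfold sigmaTop
    rw [isOpen_iSup_iff]
    simp only [isOpen_coinduced]
    constructor
    · intro hU i
      exact @Continuous.isOpen_preimage Y X (primeFactor tY b) (primeFactor tX a) i.1 (part1 i.1 i.2) U hU
    · intro h haU
      set g : Y → X := fun y =>
        if hy : ∃ x, f x = y ∧ x ∉ U then Classical.choose hy else s y with hgdef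
      have hgsec : f ∘ g = id := by
        funext y
        simp only [hgdef, Function.comp, id]
        split
        · next hy => exact (Classical.choose_spec hy).1
        · next hy => exact hsspec y
      have hgb : g b = a := by
        have hne : ¬ ∃ x, f x = b ∧ x ∉ U := by
          rintro ⟨x, hx1, hx2⟩
          have hx : x ∈ f ⁻¹' {b} := hx1
          rw [hfib] at hx
          exact hx2 (hx ▸ haU)
        simp only [hgdef, dif_neg hne]
        have hsb : s b ∈ f ⁻¹' {b} := hsspec b
        rw [hfib] at hsb; exact hsb
      have hmem : g ⁻¹' U ∈ @nhds Y tY b := by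
        have := h ⟨g, hgsec⟩
        exact this (show g b ∈ U from hgb ▸ haU)
      rw [hnhds, Filter.mem_comap]
      refine ⟨g ⁻¹' U, hmem, fun x hx => ?_⟩
      by_contra hxU
      have hbad : g (f x) ∉ U := by
        have hex : ∃ x', f x' = f x ∧ x' ∉ U := ⟨x, rfl, hxU⟩
        simp only [hgdef, dif_pos hex]
        exact (Classical.choose_spec hex).2
      exact hbad hx
end

section
/- Let 𝒜 be a class of topological spaces closed under homeomorphic copies which contains the two-point indiscrete space, and let 𝒞 ⊆ 𝒜 be closed under homeomorphic copies, closed under binary topological sums, and divisible in 𝒜. If 𝒞 contains a space having a non-isolated point (i.e., a non-discrete space), then 𝒞 contains the two-point indiscrete space. -/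
open Topology

universe u v w

/-- If `𝒜` is closed under homeomorphic copies and contains the
two-point indiscrete space, and `𝒞 ⊆ 𝒜` is closed under homeomorphic copies and
binary topological sums and is divisible in `𝒜`, then `𝒞` contains the two-point
indiscrete space as soon as it contains a non-discrete space. -/
theorem statement17 (𝒜 𝒞 : SpaceClass.{u})
    (hAhomeo : ClosedUnderHomeo 𝒜)
    (hA2 : 𝒜 (ULift.{u} Bool) ⊤)
    (hsub : ∀ (X : Type u) (tX : TopologicalSpace X), 𝒞 X tX → 𝒜 X tX)
    (hChomeo : ClosedUnderHomeo 𝒞)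
    (hCsum : ∀ (X Y : Type u) (tX : TopologicalSpace X) (tY : TopologicalSpace Y),
      𝒞 X tX → 𝒞 Y tY →
      𝒞 (X ⊕ Y) (TopologicalSpace.coinduced Sum.inl tX ⊔
        TopologicalSpace.coinduced Sum.inr tY))
    (hCdiv : ∀ (X Z : Type u) (tX : TopologicalSpace X) (tZ : TopologicalSpace Z)
      (q : X → Z), 𝒞 X tX → 𝒜 Z tZ → @IsQuotientMap X Z tX tZ q → 𝒞 Z tZ)
    (hnd : ∃ (X : Type u) (tX : TopologicalSpace X), 𝒞 X tX ∧
      ∃ x : X, ¬ @IsOpen X tX {x}) :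
    𝒞 (ULift.{u} Bool) ⊤ := by

  classical
  obtain ⟨X, tX, hCX, a, ha⟩ := hnd
  -- the quotient map from X ⊕ X to the two-point indiscrete space
  set tS : TopologicalSpace (X ⊕ X) :=
    TopologicalSpace.coinduced Sum.inl tX ⊔ TopologicalSpace.coinduced Sum.inr tX with htS
  let q : X ⊕ X → ULift.{u} Bool := fun p =>
    match p with
    | Sum.inl y => if y = a then ⟨false⟩ else ⟨true⟩
    | Sum.inr y => if y = a then ⟨true⟩ else ⟨false⟩
  have hsurj : Function.Surjective q := by
    intro b
    rcases b with ⟨b⟩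
    cases b
    · exact ⟨Sum.inl a, by simp [q]⟩
    · exact ⟨Sum.inr a, by simp [q]⟩
  have hqt : (⊤ : TopologicalSpace (ULift.{u} Bool)) = TopologicalSpace.coinduced q tS := by
    apply le_antisymm
    · -- every coinduced-open set is indiscrete-open
      intro U hU
      have hU' : @IsOpen _ tS (q ⁻¹' U) := hU
      obtain ⟨h1', h2'⟩ := isOpen_sup.mp hU'
      have h1 : @IsOpen _ tX (Sum.inl ⁻¹' (q ⁻¹' U)) := isOpen_coinduced.mp h1'
      have h2 : @IsOpen _ tX (Sum.inr ⁻¹' (q ⁻¹' U)) := isOpen_coinduced.mp h2'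
      by_cases hf : (⟨false⟩ : ULift Bool) ∈ U
      · by_cases ht : (⟨true⟩ : ULift Bool) ∈ U
        · have : U = Set.univ := by
            ext ⟨b⟩; cases b <;> simp [hf, ht]
          rw [this]; exact @isOpen_univ _ ⊤
        · exfalso
          apply ha
          have heq : (Sum.inl ⁻¹' (q ⁻¹' U) : Set X) = {a} := by
            ext y
            by_cases hy : y = a <;> simp [q, hy, hf, ht]
          rwa [heq] at h1
      · by_cases ht : (⟨true⟩ : ULift Bool) ∈ U
        · exfalso
          apply ha
          have heq : (Sum.inr ⁻¹' (q ⁻¹' U) : Set X) = {a} := by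
            ext y
            by_cases hy : y = a <;> simp [q, hy, hf, ht]
          rwa [heq] at h2
        · have : U = (∅ : Set (ULift Bool)) := by
            ext ⟨b⟩; cases b <;> simp [hf, ht]
          rw [this]; exact @isOpen_empty _ ⊤
    · exact le_top
  have hCsum' : 𝒞 (X ⊕ X) tS := hCsum X X tX tX hCX hCX
  have hqm : @IsQuotientMap _ _ tS ⊤ q := @IsQuotientMap.mk _ _ tS ⊤ q (@IsCoinducing.mk _ _ tS ⊤ q hqt) hsurj
  exact hCdiv (X ⊕ X) (ULift.{u} Bool) tS ⊤ q hCsum' hA2 hqm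
end

section
/- Let 𝒜 be an epireflective class of topological spaces containing the two-point indiscrete space, let 𝒞 be an AD-class in 𝒜 which contains the two-point indiscrete space, and let A ∈ 𝒜. Then A ∈ 𝒞 if and only if the Kolmogorov quotient of A (the quotient of A by the relation of topological indistinguishability, Mathlib's SeparationQuotient A) belongs to 𝒞. -/
open Topology

universe u v w

section Statement18Aux

open Function Set TopologicalSpace

variable {A : Type u} [tA : TopologicalSpace A]

/-- Index type for the sum used in the converse direction. -/
noncomputable def st18Index (A : Type u) [TopologicalSpace A] : Type u :=
  Option {p : A × A // SeparationQuotient.mk p.1 = SeparationQuotient.mk p.2}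

/-- Family of spaces: one copy of the separation quotient, and a two-point
indiscrete space for every pair of inseparable points. -/
noncomputable def st18Y (A : Type u) [TopologicalSpace A] : st18Index A → Type u :=
  fun i => match i with
  | none => SeparationQuotient A
  | some _ => ULift.{u} Bool

noncomputable def st18t (A : Type u) [TopologicalSpace A] :
    ∀ i : st18Index A, TopologicalSpace (st18Y A i) :=
  fun i => match i with
  | none => (inferInstance : TopologicalSpace (SeparationQuotient A))
  | some _ => ⊤

end Statement18Aux

/-- For an AD-class `𝒞` containing the two-point indiscrete space in
an epireflective class `𝒜` containing it, a space `A ∈ 𝒜` belongs to `𝒞` iff its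
Kolmogorov quotient (T0-reflection) does. -/
theorem statement18 (𝒜 𝒞 : SpaceClass.{u})
    (hA : IsEpireflectiveClass 𝒜)
    (hA2 : 𝒜 (ULift.{u} Bool) ⊤)
    (hC : IsADClass 𝒜 𝒞)
    (hC2 : 𝒞 (ULift.{u} Bool) ⊤)
    (A : Type u) [tA : TopologicalSpace A] (hAA : 𝒜 A tA) :
    𝒞 A tA ↔
      𝒞 (SeparationQuotient A) (inferInstance : TopologicalSpace (SeparationQuotient A))
    := by
  classical
  set q : A → SeparationQuotient A := SeparationQuotient.mk with hq
  have hsurj : Function.Surjective q := SeparationQuotient.surjective_mk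
  set s : SeparationQuotient A → A := Function.surjInv hsurj with hs
  have hqs : ∀ z, q (s z) = z := fun z => Function.surjInv_eq hsurj z
  have hind : Topology.IsInducing q := SeparationQuotient.isInducing_mk
  have hcont_s : Continuous s := by
    rw [hind.continuous_iff]
    have : q ∘ s = id := funext hqs
    rw [this]; exact continuous_id
  -- the separation quotient belongs to 𝒜
  have hAZ : 𝒜 (SeparationQuotient A)
      (inferInstance : TopologicalSpace (SeparationQuotient A)) := by
    have hsub := hA.subspace A tA (Set.range s) hAA
    refine hA.homeo _ _ _ _ ⟨?_⟩ hsub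
    refine Homeomorph.mk ⟨fun x => q x.1, fun z => ⟨s z, z, rfl⟩, ?_, hqs⟩ ?_ ?_
    · rintro ⟨x, z, rfl⟩
      simp [hqs]
    · exact SeparationQuotient.continuous_mk.comp continuous_subtype_val
    · exact Continuous.subtype_mk hcont_s _
  constructor
  · intro hCA
    exact hC.divisible A _ tA _ q hCA hAZ SeparationQuotient.isQuotientMap_mk
  · intro hCZ
    -- build the sum
    have hmem : ∀ i, 𝒞 (st18Y A i) (st18t A i) := by
      rintro (_ | p)
      · exact hCZ
      · exact hC2
    have hsum := hC.sums (st18Index A) (st18Y A) (st18t A) hmem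
    -- the map from the sum onto A
    let h : (Σ i, st18Y A i) → A := fun x =>
      match x with
      | ⟨none, z⟩ => s z
      | ⟨some p, b⟩ => if b.down then p.1.1 else p.1.2
    have hsurjh : Function.Surjective h := fun a =>
      ⟨⟨some ⟨(a, a), rfl⟩, ⟨true⟩⟩, rfl⟩
    -- helper: opens of A are q-preimages
    have hopen : ∀ U : Set A, IsOpen U → ∃ V : Set (SeparationQuotient A),
        IsOpen V ∧ U = q ⁻¹' V := by
      intro U hU
      obtain ⟨V, hV, hVU⟩ := hind.eq_induced ▸ hU
      exact ⟨V, hV, hVU.symm⟩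
    letI tS : TopologicalSpace (Σ i, st18Y A i) := sigmaTop (st18Y A) (st18t A)
    have hqm : IsQuotientMap h := by
      refine ⟨⟨?_⟩, hsurjh⟩
      have key : ∀ U : Set A,
          (IsOpen U ↔ ∀ i, IsOpen[st18t A i] ((h ∘ Sigma.mk i) ⁻¹' U)) := by
        intro U
        constructor
        · intro hU i
          obtain ⟨V, hV, rfl⟩ := hopen U hU
          match i with
          | none =>
            show IsOpen ((fun z => s z) ⁻¹' (q ⁻¹' V) : Set (SeparationQuotient A))
            have : ((fun z => s z) ⁻¹' (q ⁻¹' V) : Set (SeparationQuotient A)) = V := by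
              ext z; simp [hqs]
            rw [this]; exact hV
          | some p =>
            refine (TopologicalSpace.isOpen_top_iff _).2 ?_
            have same : q p.1.1 = q p.1.2 := p.2
            have hval : ∀ b : st18Y A (some p),
                h ⟨some p, b⟩ ∈ q ⁻¹' V ↔ q p.1.1 ∈ V := by
              intro b
              by_cases hb : b.down
              · show q (if b.down then p.1.1 else p.1.2) ∈ V ↔ _
                rw [if_pos hb]
              · show q (if b.down then p.1.1 else p.1.2) ∈ V ↔ _
                rw [if_neg hb, ← same]
            by_cases h1 : q p.1.1 ∈ V
            · right
              ext b
              simpa using (hval b).mpr h1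
            · left
              ext b
              simp only [Set.mem_preimage, Function.comp_apply, Set.mem_empty_iff_false,
                iff_false]
              exact fun hb => h1 ((hval b).mp hb)
        · intro hall
          have hVopen : IsOpen (s ⁻¹' U) := hall none
          have hU_eq : U = q ⁻¹' (s ⁻¹' U) := by
            ext a
            simp only [Set.mem_preimage]
            have hp : q a = q (s (q a)) := (hqs (q a)).symm
            have := hall (some ⟨(a, s (q a)), hp⟩)
            replace this := (TopologicalSpace.isOpen_top_iff _).1 this
            rcases this with hE | hE
            · constructor
              · intro ha
                exfalso
                have : (⟨true⟩ : ULift Bool) ∈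
                    (h ∘ Sigma.mk (some ⟨(a, s (q a)), hp⟩)) ⁻¹' U := ha
                exact (Set.ext_iff.1 hE _).1 this
              · intro ha
                exfalso
                have : (⟨false⟩ : ULift Bool) ∈
                    (h ∘ Sigma.mk (some ⟨(a, s (q a)), hp⟩)) ⁻¹' U := ha
                exact (Set.ext_iff.1 hE _).1 this
            · constructor
              · intro _
                have : (⟨false⟩ : ULift Bool) ∈
                    (h ∘ Sigma.mk (some ⟨(a, s (q a)), hp⟩)) ⁻¹' U := by
                  exact (Set.ext_iff.1 hE _).2 trivial
                exact this
              · intro _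
                have : (⟨true⟩ : ULift Bool) ∈
                    (h ∘ Sigma.mk (some ⟨(a, s (q a)), hp⟩)) ⁻¹' U := by
                  exact (Set.ext_iff.1 hE _).2 trivial
                exact this
          rw [hU_eq]
          exact (SeparationQuotient.continuous_mk.comp continuous_id).isOpen_preimage _
            hVopen
      refine TopologicalSpace.ext_iff.2 fun U => ?_
      rw [key U, isOpen_coinduced]
      show _ ↔ IsOpen[sigmaTop (st18Y A) (st18t A)] (h ⁻¹' U)
      rw [sigmaTop, isOpen_iSup_iff]
      refine forall_congr' fun i => ?_
      rw [isOpen_coinduced]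
      exact Iff.rfl
    exact hC.divisible _ A _ tA h hsum hAA hqm
end

section
/- Let 𝒜 be an epireflective class of topological spaces which contains the two-point indiscrete space and contains at least one space that is not indiscrete, and let 𝒞 be an AD-class in 𝒜. Then 𝒞 is hereditary if and only if the class {X ∈ 𝒞 : X is a T0 space} is hereditary. -/
open Topology

universe u v w

section AuxLemmas

open Function Set TopologicalSpace

variable {𝒜 𝒞 : SpaceClass.{u}}

/-- Any equiv between indiscrete spaces is a homeomorphism. -/
lemma aux_homeo_top {α β : Type u} (e : α ≃ β) : Nonempty (@Homeomorph α β ⊤ ⊤) :=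
  ⟨@Homeomorph.mk α β ⊤ ⊤ e continuous_top continuous_top⟩

/-- Every indiscrete space belongs to an epireflective class containing the
two-point indiscrete space. -/
lemma aux_A_indiscrete (hA : IsEpireflectiveClass 𝒜) (hA2 : 𝒜 (ULift.{u} Bool) ⊤)
    (T : Type u) : 𝒜 T (⊤ : TopologicalSpace T) := by
  classical
  have hP := hA.prod T (fun _ => ULift.{u} Bool) (fun _ => ⊤) (fun _ => hA2)
  have hPtop : (@Pi.topologicalSpace T (fun _ => ULift.{u} Bool) (fun _ => ⊤)) = ⊤ := by
    simp [Pi.topologicalSpace, induced_top]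
  rw [hPtop] at hP
  have hinj : Function.Injective (fun (a : T) (b : T) => ULift.up.{u} (decide (b = a))) := by
    intro a a' haa
    have h1 : decide (a = a) = decide (a = a') := congrArg ULift.down (congrFun haa a)
    rw [decide_eq_decide] at h1
    exact h1.1 rfl
  have hsub := hA.subspace _ ⊤
    (Set.range (fun (a : T) (b : T) => ULift.up.{u} (decide (b = a)))) hP
  rw [induced_top] at hsub
  exact hA.homeo _ _ ⊤ ⊤ (aux_homeo_top (Equiv.ofInjective _ hinj).symm) hsub

/-- If an AD-class contains the two-point indiscrete space then it contains every
nonempty indiscrete space. -/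
lemma aux_C_indiscrete (hC : IsADClass 𝒜 𝒞) (hA : IsEpireflectiveClass 𝒜)
    (hA2 : 𝒜 (ULift.{u} Bool) ⊤) (hD2 : 𝒞 (ULift.{u} Bool) ⊤)
    (T : Type u) (hT : Nonempty T) : 𝒞 T (⊤ : TopologicalSpace T) := by
  classical
  have hsum := hC.sums (T × T) (fun _ => ULift.{u} Bool) (fun _ => ⊤) (fun _ => hD2)
  let q : (Σ _ : T × T, ULift.{u} Bool) → T := fun p => cond p.2.down p.1.1 p.1.2
  have hsurj : Function.Surjective q := fun x => ⟨⟨(x, x), ULift.up true⟩, rfl⟩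
  refine hC.divisible _ _ (sigmaTop _ _) ⊤ q hsum (aux_A_indiscrete hA hA2 T)
    (@IsQuotientMap.mk _ _ (sigmaTop _ _) ⊤ q (@IsCoinducing.mk _ _ (sigmaTop _ _) ⊤ q ?_) hsurj)
  refine TopologicalSpace.ext_iff.2 fun U => ?_
  rw [TopologicalSpace.isOpen_top_iff]
  constructor
  · rintro (rfl | rfl)
    · show IsOpen[sigmaTop _ _] (q ⁻¹' ∅)
      rw [Set.preimage_empty]
      exact @isOpen_empty _ (sigmaTop _ _)
    · show IsOpen[sigmaTop _ _] (q ⁻¹' Set.univ)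
      rw [Set.preimage_univ]
      exact @isOpen_univ _ (sigmaTop _ _)
  · intro hU
    have h0 : IsOpen[sigmaTop (fun _ : T × T => ULift.{u} Bool) (fun _ => ⊤)] (q ⁻¹' U) := hU
    rw [sigmaTop, isOpen_iSup_iff] at h0
    have key : ∀ x y : T, x ∈ U ↔ y ∈ U := by
      intro x y
      have h1 := h0 (x, y)
      rw [isOpen_coinduced, TopologicalSpace.isOpen_top_iff] at h1
      have h2 := h1
      have htrue : ((ULift.up true : ULift.{u} Bool) ∈ Sigma.mk (x, y) ⁻¹' (q ⁻¹' U)) ↔ x ∈ U :=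
        Iff.rfl
      have hfalse : ((ULift.up false : ULift.{u} Bool) ∈ Sigma.mk (x, y) ⁻¹' (q ⁻¹' U)) ↔ y ∈ U :=
        Iff.rfl
      rcases h2 with h | h
      · rw [h] at htrue hfalse
        simp only [Set.mem_empty_iff_false, false_iff] at htrue hfalse
        exact iff_of_false htrue hfalse
      · rw [h] at htrue hfalse
        simp only [Set.mem_univ, true_iff] at htrue hfalse
        exact iff_of_true htrue hfalse
    obtain ⟨t0⟩ := hT
    by_cases ht0 : t0 ∈ U
    · right; ext x; simp only [Set.mem_univ, iff_true]; exact (key x t0).2 ht0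
    · left; ext x; simp only [Set.mem_empty_iff_false, iff_false]
      exact fun hx => ht0 ((key x t0).1 hx)

/-- If an AD-class has a member with two distinct inseparable points, then it
contains the two-point indiscrete space. -/
lemma aux_C_D2 (hC : IsADClass 𝒜 𝒞) (hA2 : 𝒜 (ULift.{u} Bool) ⊤)
    (X : Type u) (tX : TopologicalSpace X) (hX : 𝒞 X tX)
    (a b : X) (hab : a ≠ b) (hins : @Inseparable X tX a b) :
    𝒞 (ULift.{u} Bool) (⊤ : TopologicalSpace (ULift.{u} Bool)) := by
  classical
  letI := tX
  let q : X → ULift.{u} Bool := fun x => ULift.up (decide (x = a))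
  have hsurj : Function.Surjective q := by
    rintro ⟨y⟩
    cases y with
    | true => exact ⟨a, by simp [q]⟩
    | false =>
      refine ⟨b, ?_⟩
      have hba : ¬ b = a := fun hh => hab hh.symm
      simp [q, hba]
  refine hC.divisible X _ tX ⊤ q hX hA2 (@IsQuotientMap.mk _ _ tX ⊤ q (@IsCoinducing.mk _ _ tX ⊤ q ?_) hsurj)
  refine TopologicalSpace.ext_iff.2 fun U => ?_
  rw [TopologicalSpace.isOpen_top_iff]
  constructor
  · rintro (rfl | rfl)
    · show IsOpen[tX] (q ⁻¹' ∅)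
      rw [Set.preimage_empty]; exact isOpen_empty
    · show IsOpen[tX] (q ⁻¹' Set.univ)
      rw [Set.preimage_univ]; exact isOpen_univ
  · intro hU
    have hU' : IsOpen[tX] (q ⁻¹' U) := hU
    by_cases h1 : (ULift.up true : ULift.{u} Bool) ∈ U <;>
      by_cases h2 : (ULift.up false : ULift.{u} Bool) ∈ U
    · right; ext ⟨y⟩; cases y <;> simp [h1, h2]
    · exfalso
      have hpre : q ⁻¹' U = {x | x = a} := by
        ext x
        by_cases hx : x = a <;> simp [q, hx, h1, h2]
      rw [hpre] at hU'
      have hbmem : b ∈ {x | x = a} := (hins.mem_open_iff hU').1 rfl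
      exact hab hbmem.symm
    · exfalso
      have hpre : q ⁻¹' U = {x | ¬ x = a} := by
        ext x
        by_cases hx : x = a <;> simp [q, hx, h1, h2]
      rw [hpre] at hU'
      have hamem : a ∈ {x | ¬ x = a} :=
        (hins.mem_open_iff hU').2 (fun h : b = a => hab h.symm)
      exact hamem rfl
    · left; ext ⟨y⟩; cases y <;> simp [h1, h2]

/-- The fiber of a map over a point. -/
def auxFib {N S : Type u} (p : S → N) (c : N) : Type u := {z : S // p z = c}

/-- The index family used in the quotient construction. -/
def auxY {N S : Type u} (p : S → N) : Option N → Type u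
  | none => N
  | some c => auxFib p c

/-- The topologies on the summands: `tN` on the copy of `N`, indiscrete on the fibers. -/
def auxt {N S : Type u} (tN : TopologicalSpace N) (p : S → N) :
    ∀ o : Option N, TopologicalSpace (auxY p o)
  | none => tN
  | some _ => (⊤ : TopologicalSpace _)

/-- The quotient map from the sum onto `S`. -/
noncomputable def auxF {N S : Type u} (p : S → N) (hp : Function.Surjective p) :
    (Σ o, auxY p o) → S
  | ⟨none, c⟩ => (hp c).choose
  | ⟨some _, z⟩ => z.val

/-- Key lemma: a space whose topology is induced by a surjection `p : S → N` onto a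
member `N` of the AD-class `𝒞` belongs to `𝒞`, provided `𝒞` contains the two-point
indiscrete space (so that the fibers of `p`, as indiscrete spaces, are in `𝒞`). -/
lemma aux_key (hC : IsADClass 𝒜 𝒞) (hA : IsEpireflectiveClass 𝒜)
    (hA2 : 𝒜 (ULift.{u} Bool) ⊤) (hD2 : 𝒞 (ULift.{u} Bool) ⊤)
    (N : Type u) (tN : TopologicalSpace N) (S : Type u) (p : S → N)
    (hp : Function.Surjective p) (hN : 𝒞 N tN)
    (hAS : 𝒜 S (TopologicalSpace.induced p tN)) :
    𝒞 S (TopologicalSpace.induced p tN) := by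
  classical
  have hFne : ∀ c, Nonempty (auxFib p c) := fun c => ⟨⟨(hp c).choose, (hp c).choose_spec⟩⟩
  have hYC : ∀ o, 𝒞 (auxY p o) (auxt tN p o) := by
    intro o
    cases o with
    | none => exact hN
    | some c => exact aux_C_indiscrete hC hA hA2 hD2 (auxFib p c) (hFne c)
  have hsum := hC.sums (Option N) (auxY p) (auxt tN p) hYC
  have hsurjF : Function.Surjective (auxF p hp) := fun z => ⟨⟨some (p z), ⟨z, rfl⟩⟩, rfl⟩
  refine hC.divisible _ _ (sigmaTop _ _) _ (auxF p hp) hsum hAS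
    (@IsQuotientMap.mk _ _ (sigmaTop _ _) (TopologicalSpace.induced p tN) (auxF p hp)
      (@IsCoinducing.mk _ _ (sigmaTop _ _) (TopologicalSpace.induced p tN) (auxF p hp) ?_) hsurjF)
  refine TopologicalSpace.ext_iff.2 fun U => ?_
  constructor
  · intro hU
    obtain ⟨V, hV, rfl⟩ := isOpen_induced_iff.1 hU
    show IsOpen[sigmaTop _ _] (auxF p hp ⁻¹' (p ⁻¹' V))
    rw [sigmaTop, isOpen_iSup_iff]
    intro o
    cases o with
    | none =>
      have heq : Sigma.mk none ⁻¹' (auxF p hp ⁻¹' (p ⁻¹' V)) = V := by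
        ext c
        show p ((hp c).choose) ∈ V ↔ c ∈ V
        rw [(hp c).choose_spec]; exact Iff.rfl
      show IsOpen[TopologicalSpace.coinduced (Sigma.mk none) tN]
        (auxF p hp ⁻¹' (p ⁻¹' V))
      erw [isOpen_coinduced, heq]
      exact hV
    | some c =>
      show IsOpen[TopologicalSpace.coinduced (Sigma.mk (some c)) (⊤ : TopologicalSpace (auxFib p c))]
        (auxF p hp ⁻¹' (p ⁻¹' V))
      erw [isOpen_coinduced, TopologicalSpace.isOpen_top_iff]
      by_cases hc : c ∈ V
      · right; ext z
        simp only [Set.mem_univ, iff_true]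
        show p z.val ∈ V
        rw [z.2]; exact hc
      · left; ext z
        simp only [Set.mem_empty_iff_false, iff_false]
        show ¬ p z.val ∈ V
        rw [z.2]; exact hc
  · intro hU
    have h0 : IsOpen[sigmaTop (auxY p) (auxt tN p)] (auxF p hp ⁻¹' U) := hU
    rw [sigmaTop, isOpen_iSup_iff] at h0
    have hdich : ∀ z : S, (z ∈ U ↔ (hp (p z)).choose ∈ U) := by
      intro z
      have h1 : IsOpen[TopologicalSpace.coinduced (Sigma.mk (some (p z)))
          (⊤ : TopologicalSpace (auxFib p (p z)))] (auxF p hp ⁻¹' U) := h0 (some (p z))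
      erw [isOpen_coinduced, TopologicalSpace.isOpen_top_iff] at h1
      have hm1 : ((⟨z, rfl⟩ : auxFib p (p z)) ∈ Sigma.mk (some (p z)) ⁻¹' (auxF p hp ⁻¹' U))
          ↔ z ∈ U := Iff.rfl
      have hm2 : ((⟨(hp (p z)).choose, (hp (p z)).choose_spec⟩ : auxFib p (p z))
          ∈ Sigma.mk (some (p z)) ⁻¹' (auxF p hp ⁻¹' U)) ↔ (hp (p z)).choose ∈ U := Iff.rfl
      rcases h1 with h | h
      · rw [h] at hm1 hm2
        have hm1' : ¬ z ∈ U := fun hz => hm1.2 hz; have hm2' : ¬ (hp (p z)).choose ∈ U := fun hz => hm2.2 hz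
        exact iff_of_false hm1' hm2'
      · rw [h] at hm1 hm2
        have hm1' : z ∈ U := hm1.1 trivial; have hm2' : (hp (p z)).choose ∈ U := hm2.1 trivial
        exact iff_of_true hm1' hm2'
    have hnone : IsOpen[TopologicalSpace.coinduced (Sigma.mk none) tN]
        (auxF p hp ⁻¹' U) := h0 none
    erw [isOpen_coinduced] at hnone
    have hnone' : @IsOpen N tN ((Sigma.mk (β := auxY p) none) ⁻¹' (auxF p hp ⁻¹' U)) := hnone
    rw [isOpen_induced_iff]
    refine ⟨(Sigma.mk (β := auxY p) none) ⁻¹' (auxF p hp ⁻¹' U), hnone', ?_⟩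
    ext z
    show (hp (p z)).choose ∈ U ↔ z ∈ U
    exact (hdich z).symm

end AuxLemmas


/-- For an AD-class `𝒞` in an epireflective class `𝒜` that contains
the two-point indiscrete space and some non-indiscrete space, `𝒞` is hereditary iff
the class of T0 members of `𝒞` is hereditary. -/
theorem statement19 (𝒜 𝒞 : SpaceClass.{u})
    (hA : IsEpireflectiveClass 𝒜)
    (hA2 : 𝒜 (ULift.{u} Bool) ⊤)
    (hAnontriv : ∃ (X : Type u) (tX : TopologicalSpace X), 𝒜 X tX ∧ tX ≠ ⊤)
    (hC : IsADClass 𝒜 𝒞) :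
    IsHereditary 𝒞 ↔
      IsHereditary (fun (X : Type u) (tX : TopologicalSpace X) =>
        𝒞 X tX ∧ @T0Space X tX) := by
  classical
  constructor
  · -- easy direction
    intro h X tX s hs hXT
    refine ⟨h X tX s hs hXT.1, ?_⟩
    letI := tX
    haveI := hXT.2
    exact Subtype.t0Space
  · intro h X tX s hs hX
    letI := tX
    by_cases hT0X : T0Space X
    · exact (h X tX s hs ⟨hX, hT0X⟩).1
    rw [t0Space_iff_inseparable] at hT0X
    push_neg at hT0X
    obtain ⟨a, b, hins, hab⟩ := hT0X
    have hD2 : 𝒞 (ULift.{u} Bool) ⊤ := aux_C_D2 hC hA2 X tX hX a b hab hins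
    -- the representative function
    let rep : X → X := fun x =>
      Function.surjInv (SeparationQuotient.surjective_mk (X := X)) (SeparationQuotient.mk x)
    have hmk : ∀ x, SeparationQuotient.mk (rep x) = SeparationQuotient.mk x := fun x =>
      Function.surjInv_eq _ _
    have hinsrep : ∀ x, Inseparable (rep x) x := fun x => SeparationQuotient.mk_eq_mk.1 (hmk x)
    have hrepcong : ∀ x y, Inseparable x y → rep x = rep y := by
      intro x y hxy
      show Function.surjInv _ (SeparationQuotient.mk x) = Function.surjInv _ (SeparationQuotient.mk y)
      rw [SeparationQuotient.mk_eq_mk.2 hxy]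
    have hidem : ∀ x, rep (rep x) = rep x := fun x => hrepcong _ _ (hinsrep x)
    -- the set of representatives, a T0 member of 𝒞
    let R : Set X := Set.range rep
    let rmap : X → R := fun x => ⟨rep x, ⟨x, rfl⟩⟩
    have hrmapfix : ∀ w : R, rmap (w : X) = w := by
      rintro ⟨_, x, rfl⟩
      exact Subtype.ext (hidem x)
    have hrq : @IsQuotientMap X R tX (TopologicalSpace.induced Subtype.val tX) rmap := by
      refine ⟨⟨?_⟩, ?_⟩; swap
      · rintro ⟨_, x, rfl⟩; exact ⟨x, rfl⟩
      · refine TopologicalSpace.ext_iff.2 fun W => ?_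
        constructor
        · intro hW
          obtain ⟨V, hV, rfl⟩ := isOpen_induced_iff.1 hW
          show IsOpen[tX] (rmap ⁻¹' (Subtype.val ⁻¹' V))
          have heq : rmap ⁻¹' (Subtype.val ⁻¹' V) = V := by
            ext x
            show rep x ∈ V ↔ x ∈ V
            exact (hinsrep x).mem_open_iff hV
          rw [heq]; exact hV
        · intro hW
          have hW' : IsOpen[tX] (rmap ⁻¹' W) := hW
          rw [isOpen_induced_iff]
          refine ⟨rmap ⁻¹' W, hW', ?_⟩
          ext w
          show rmap (w : X) ∈ W ↔ w ∈ W
          rw [hrmapfix w]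
    have hAR : 𝒜 R (TopologicalSpace.induced Subtype.val tX) :=
      hA.subspace X tX R (hC.subset X tX hX)
    have hCR : 𝒞 R (TopologicalSpace.induced Subtype.val tX) :=
      hC.divisible X R tX _ rmap hX hAR hrq
    have hT0R : @T0Space R (TopologicalSpace.induced Subtype.val tX) := by
      rw [t0Space_iff_inseparable]
      intro u v huv
      have h1 : Inseparable (u : X) (v : X) := huv.map continuous_subtype_val
      obtain ⟨x, hx⟩ := u.2
      obtain ⟨y, hy⟩ := v.2
      have hu : rep (u : X) = (u : X) := by rw [← hx, hidem]
      have hv : rep (v : X) = (v : X) := by rw [← hy, hidem]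
      exact Subtype.ext (by rw [← hu, ← hv, hrepcong _ _ h1])
    -- the image of s among the representatives
    let N : Set X := rep '' s
    have hNsubR : ∀ x ∈ N, x ∈ R := by rintro _ ⟨y, _, rfl⟩; exact ⟨y, rfl⟩
    let s₀ : Set R := Subtype.val ⁻¹' N
    have hs₀ne : s₀.Nonempty := by
      obtain ⟨z, hz⟩ := hs
      exact ⟨⟨rep z, ⟨z, rfl⟩⟩, ⟨z, hz, rfl⟩⟩
    have happ := h R (TopologicalSpace.induced Subtype.val tX) s₀ hs₀ne ⟨hCR, hT0R⟩
    -- transport to N as a subspace of X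
    have hCN : 𝒞 N (TopologicalSpace.induced Subtype.val tX) := by
      refine hC.homeo s₀ N _ _ ⟨?_⟩ happ.1
      exact
        { toFun := fun w => ⟨((w : R) : X), w.2⟩
          invFun := fun x => ⟨⟨(x : X), hNsubR _ x.2⟩, x.2⟩
          left_inv := fun w => rfl
          right_inv := fun x => rfl
          continuous_toFun :=
            Continuous.subtype_mk (continuous_subtype_val.comp continuous_subtype_val) _
          continuous_invFun :=
            Continuous.subtype_mk (Continuous.subtype_mk continuous_subtype_val _) _ }
    -- the projection of s onto N
    let pmap : s → N := fun z => ⟨rep (z : X), ⟨(z : X), z.2, rfl⟩⟩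
    have hpsurj : Function.Surjective pmap := by
      rintro ⟨_, y, hy, rfl⟩
      exact ⟨⟨y, hy⟩, rfl⟩
    have heq : (TopologicalSpace.induced (Subtype.val : s → X) tX)
        = TopologicalSpace.induced pmap (TopologicalSpace.induced (Subtype.val : N → X) tX) := by
      rw [induced_compose]
      refine TopologicalSpace.ext_iff.2 fun U => ?_
      rw [isOpen_induced_iff, isOpen_induced_iff]
      constructor
      · rintro ⟨V, hV, rfl⟩
        refine ⟨V, hV, ?_⟩
        ext z
        show rep (z : X) ∈ V ↔ (z : X) ∈ V
        exact (hinsrep _).mem_open_iff hV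
      · rintro ⟨V, hV, rfl⟩
        refine ⟨V, hV, ?_⟩
        ext z
        show (z : X) ∈ V ↔ rep (z : X) ∈ V
        exact ((hinsrep _).mem_open_iff hV).symm
    rw [heq]
    have hAs : 𝒜 s (TopologicalSpace.induced pmap (TopologicalSpace.induced Subtype.val tX)) := by
      rw [← heq]
      exact hA.subspace X tX s (hC.subset X tX hX)
    exact aux_key hC hA hA2 hD2 N _ s pmap hpsurj hCN hAs
end
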